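/- arXiv:1510.05014 — 2 statements merged into one kernel-verified Lean document; each statement's English description precedes it below -/
import Mathlib

section
/- Let {X_t} be a stationary process with autocovariance function γ satisfying |γ(t)| ≤ γ(0) c e^{−ρt}, with ρ > log(2c+1) if γ takes negative values. Let V² ∈ R^{n×n} be the covariance matrix of the partial sums S_t = ∑_{i=1}^t X_i, i.e., (V²)_{t,s} = Cov(S_t, S_s). Then ||V||_F² ∼ n² and ||V²||_F ∼ n², so the ratio ||V²||_F / ||V||_F² does not converge to zero. -/
open Filter

lemma geomA {q : ℝ} (hq0 : 0 ≤ q) (hq1 : q < 1) (F : Finset ℕ) :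
    ∑ m ∈ F, q ^ m ≤ 1 / (1 - q) := by
  classical
  have h1q : 0 < 1 - q := by linarith
  set N := F.sup id + 1 with hN
  have hsub : F ⊆ Finset.range N := by
    intro m hm
    exact Finset.mem_range.mpr (Nat.lt_succ_of_le (Finset.le_sup (f := id) hm))
  calc ∑ m ∈ F, q ^ m ≤ ∑ m ∈ Finset.range N, q ^ m :=
        Finset.sum_le_sum_of_subset_of_nonneg hsub (fun i _ _ => by positivity)
    _ ≤ 1 / (1 - q) := by
        rw [geom_sum_eq (by linarith : q ≠ 1)]
        have h2 : (q ^ N - 1) / (q - 1) = (1 - q ^ N) / (1 - q) := by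
          rw [div_eq_div_iff (by linarith) (by linarith)]; ring
        rw [h2]
        have h3 : 0 ≤ q ^ N := pow_nonneg hq0 N
        gcongr
        linarith

lemma sum_image_le {q : ℝ} (hq0 : 0 ≤ q) (hq1 : q < 1) {α : Type*} [DecidableEq α]
    (F : Finset α) (g : α → ℕ) (hinj : ∀ x ∈ F, ∀ y ∈ F, g x = g y → x = y) :
    ∑ i ∈ F, q ^ (g i) ≤ 1 / (1 - q) := by
  calc ∑ i ∈ F, q ^ (g i) = ∑ m ∈ F.image g, q ^ m := (Finset.sum_image hinj).symm
    _ ≤ 1 / (1 - q) := geomA hq0 hq1 _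

lemma geomZ_nonneg {q : ℝ} (hq0 : 0 ≤ q) (hq1 : q < 1) (T : Finset ℤ)
    (hT : ∀ k ∈ T, 0 ≤ k) : ∑ k ∈ T, q ^ k.natAbs ≤ 1 / (1 - q) := by
  apply sum_image_le hq0 hq1 T Int.natAbs
  intro a ha b hb hab
  have := hT a ha; have := hT b hb; omega

lemma geomZ_one {q : ℝ} (hq0 : 0 ≤ q) (hq1 : q < 1) (T : Finset ℤ)
    (hT : ∀ k ∈ T, 1 ≤ k) : ∑ k ∈ T, q ^ k.natAbs ≤ q / (1 - q) := by
  have h1q : 0 < 1 - q := by linarith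
  have he : ∑ k ∈ T, q ^ k.natAbs = q * ∑ k ∈ T, q ^ (k - 1).natAbs := by
    rw [Finset.mul_sum]
    apply Finset.sum_congr rfl
    intro k hk
    have h1 : k.natAbs = (k - 1).natAbs + 1 := by have := hT k hk; omega
    rw [h1, pow_succ]; ring
  rw [he]
  have h2 : ∑ k ∈ T, q ^ (k - 1).natAbs ≤ 1 / (1 - q) := by
    apply sum_image_le hq0 hq1 T (fun k => (k - 1).natAbs)
    intro a ha b hb hab
    have := hT a ha; have := hT b hb
    omega
  calc q * ∑ k ∈ T, q ^ (k - 1).natAbs ≤ q * (1 / (1 - q)) :=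
        mul_le_mul_of_nonneg_left h2 hq0
    _ = q / (1 - q) := by ring

lemma geomZ_leneg {q : ℝ} (hq0 : 0 ≤ q) (hq1 : q < 1) (T : Finset ℤ)
    (hT : ∀ k ∈ T, k ≤ -1) : ∑ k ∈ T, q ^ k.natAbs ≤ q / (1 - q) := by
  have h1q : 0 < 1 - q := by linarith
  have he : ∑ k ∈ T, q ^ k.natAbs = q * ∑ k ∈ T, q ^ (-k - 1).natAbs := by
    rw [Finset.mul_sum]
    apply Finset.sum_congr rfl
    intro k hk
    have h1 : k.natAbs = (-k - 1).natAbs + 1 := by have := hT k hk; omega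
    rw [h1, pow_succ]; ring
  rw [he]
  have h2 : ∑ k ∈ T, q ^ (-k - 1).natAbs ≤ 1 / (1 - q) := by
    apply sum_image_le hq0 hq1 T (fun k => (-k - 1).natAbs)
    intro a ha b hb hab
    have := hT a ha; have := hT b hb
    omega
  calc q * ∑ k ∈ T, q ^ (-k - 1).natAbs ≤ q * (1 / (1 - q)) :=
        mul_le_mul_of_nonneg_left h2 hq0
    _ = q / (1 - q) := by ring

lemma geomZ_ne {q : ℝ} (hq0 : 0 ≤ q) (hq1 : q < 1) (T : Finset ℤ)
    (hT : ∀ k ∈ T, k ≠ 0) : ∑ k ∈ T, q ^ k.natAbs ≤ 2 * q / (1 - q) := by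
  classical
  rw [← Finset.sum_filter_add_sum_filter_not T (fun k => 1 ≤ k)]
  have h1 := geomZ_one hq0 hq1 (T.filter (fun k => 1 ≤ k))
      (fun k hk => (Finset.mem_filter.mp hk).2)
  have h2 : ∑ k ∈ T.filter (fun k => ¬ 1 ≤ k), q ^ k.natAbs ≤ q / (1 - q) := by
    apply geomZ_leneg hq0 hq1
    intro k hk
    have h := Finset.mem_filter.mp hk
    have := hT k h.1
    omega
  have : 2 * q / (1 - q) = q / (1 - q) + q / (1 - q) := by ring
  linarith

lemma geomZ_all {q : ℝ} (hq0 : 0 ≤ q) (hq1 : q < 1) (T : Finset ℤ) :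
    ∑ k ∈ T, q ^ k.natAbs ≤ 2 / (1 - q) := by
  classical
  have h1q : 0 < 1 - q := by linarith
  rw [← Finset.sum_filter_add_sum_filter_not T (fun k => 0 ≤ k)]
  have h1 := geomZ_nonneg hq0 hq1 (T.filter (fun k => 0 ≤ k))
      (fun k hk => (Finset.mem_filter.mp hk).2)
  have h2 : ∑ k ∈ T.filter (fun k => ¬ 0 ≤ k), q ^ k.natAbs ≤ q / (1 - q) := by
    apply geomZ_leneg hq0 hq1
    intro k hk
    have h := Finset.mem_filter.mp hk
    omega
  have h3 : q / (1 - q) ≤ 1 / (1 - q) := by gcongr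
  have : 2 / (1 - q) = 1 / (1 - q) + 1 / (1 - q) := by ring
  linarith

set_option maxHeartbeats 1000000 in
/-- For the covariance matrix `V²` of the partial sums of a stationary process with
exponentially decaying autocovariance `γ` (with `ρ > log(2c+1)` if `γ` takes negative
values), `‖V‖_F² = trace(V²) ∼ n²` and `‖V²‖_F ∼ n²`, so the ratio `‖V²‖_F/‖V‖_F²`
does not converge to zero.  Here `(V²)_{t,s} = ∑_{i=1}^t ∑_{j=1}^s γ(i−j)`. -/
theorem integrated_process_frobenius
    (γ : ℤ → ℝ) (c ρ : ℝ) (hc : 0 < c) (hρ : 0 < ρ) (hγ0 : 0 < γ 0)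
    (hsym : ∀ t : ℤ, γ (-t) = γ t)
    (hdecay : ∀ t : ℕ, 1 ≤ t → |γ t| ≤ γ 0 * c * Real.exp (-ρ * t))
    (hneg : (∃ t : ℤ, γ t < 0) → Real.log (2 * c + 1) < ρ)
    -- `cov t s = Cov(S_t, S_s)` for the partial sums `S_t = X_1 + ⋯ + X_t`
    (cov : ℕ → ℕ → ℝ)
    (hcov : ∀ t s : ℕ, cov t s =
      ∑ i ∈ Finset.Icc 1 t, ∑ j ∈ Finset.Icc 1 s, γ ((i : ℤ) - (j : ℤ)))
    -- `tr n = ‖V‖_F² = trace(V²)` and `fr n = ‖V²‖_F` for the `n × n` covariance matrix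
    (tr fr : ℕ → ℝ)
    (htr : ∀ n : ℕ, tr n = ∑ t ∈ Finset.Icc 1 n, cov t t)
    (hfr : ∀ n : ℕ, fr n =
      Real.sqrt (∑ t ∈ Finset.Icc 1 n, ∑ s ∈ Finset.Icc 1 n, (cov t s) ^ 2)) :
    (∃ c₁ c₂ : ℝ, 0 < c₁ ∧ c₁ < c₂ ∧ ∀ᶠ n : ℕ in atTop,
        (c₁ ≤ tr n / (n : ℝ) ^ 2 ∧ tr n / (n : ℝ) ^ 2 ≤ c₂) ∧
        (c₁ ≤ fr n / (n : ℝ) ^ 2 ∧ fr n / (n : ℝ) ^ 2 ≤ c₂)) ∧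
    ¬ Tendsto (fun n : ℕ => fr n / tr n) atTop (nhds 0) := by
  classical
  set q := Real.exp (-ρ) with hqdef
  have hq0 : 0 < q := Real.exp_pos _
  have hq1 : q < 1 := by
    rw [hqdef]
    calc Real.exp (-ρ) < Real.exp 0 := Real.exp_lt_exp.mpr (by linarith)
      _ = 1 := Real.exp_zero
  have h1q : 0 < 1 - q := by linarith
  -- pointwise decay on ℤ
  have hZ : ∀ k : ℤ, k ≠ 0 → |γ k| ≤ γ 0 * c * q ^ k.natAbs := by
    intro k hk
    have hγk : γ k = γ (k.natAbs : ℤ) := by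
      rcases Int.natAbs_eq k with h | h
      · rw [← h]
      · rw [← hsym (k.natAbs : ℤ), ← h]
    have h1 : 1 ≤ k.natAbs := by omega
    have h2 := hdecay k.natAbs h1
    have h3 : Real.exp (-ρ * (k.natAbs : ℝ)) = q ^ k.natAbs := by
      rw [hqdef, ← Real.exp_nat_mul]
      ring_nf
    rw [hγk]
    rw [h3] at h2
    exact h2
  obtain ⟨M0, hM0def⟩ : ∃ x : ℝ, x = γ 0 + γ 0 * c * (2 / (1 - q)) := ⟨_, rfl⟩
  obtain ⟨B, hBdef⟩ : ∃ x : ℝ, x = γ 0 * c * (2 * q / (1 - q)) := ⟨_, rfl⟩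
  obtain ⟨Cq, hCdef⟩ : ∃ x : ℝ, x = γ 0 * c * (1 / (1 - q) * (q / (1 - q))) := ⟨_, rfl⟩
  have hM0pos : 0 < M0 := by rw [hM0def]; positivity
  have hCnn : 0 ≤ Cq := by rw [hCdef]; positivity
  -- row bound with absolute values
  have hrowAbs : ∀ (i : ℤ) (s : ℕ), ∑ j ∈ Finset.Icc 1 s, |γ (i - (j : ℤ))| ≤ M0 := by
    intro i s
    rw [hM0def]
    have hinj : ∀ x ∈ Finset.Icc 1 s, ∀ y ∈ Finset.Icc 1 s,
        i - (x : ℤ) = i - (y : ℤ) → x = y := by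
      intro x _ y _ h; omega
    have him : ∑ j ∈ Finset.Icc 1 s, |γ (i - (j : ℤ))|
        = ∑ k ∈ (Finset.Icc 1 s).image (fun j : ℕ => i - (j : ℤ)), |γ k| :=
      (Finset.sum_image (f := fun k : ℤ => |γ k|) hinj).symm
    rw [him]
    set T := (Finset.Icc 1 s).image (fun j : ℕ => i - (j : ℤ)) with hT
    calc ∑ k ∈ T, |γ k|
        ≤ ∑ k ∈ T, ((if k = 0 then γ 0 else 0) + γ 0 * c * q ^ k.natAbs) := by
          apply Finset.sum_le_sum
          intro k _
          by_cases h : k = 0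
          · subst h
            rw [if_pos rfl, abs_of_pos hγ0]
            have : (0:ℝ) ≤ γ 0 * c * q ^ (0:ℤ).natAbs := by positivity
            linarith
          · rw [if_neg h]
            have := hZ k h
            linarith
      _ = (∑ k ∈ T, if k = 0 then γ 0 else 0) + γ 0 * c * ∑ k ∈ T, q ^ k.natAbs := by
          rw [Finset.sum_add_distrib, Finset.mul_sum]
      _ ≤ γ 0 + γ 0 * c * (2 / (1 - q)) := by
          have e1 : (∑ k ∈ T, if k = 0 then γ 0 else 0) ≤ γ 0 := by
            rw [Finset.sum_ite_eq' T (0 : ℤ) (fun _ => γ 0)]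
            split
            · exact le_refl _
            · exact le_of_lt hγ0
          have e2 := geomZ_all hq0.le hq1 T
          have e3 : γ 0 * c * ∑ k ∈ T, q ^ k.natAbs ≤ γ 0 * c * (2 / (1 - q)) :=
            mul_le_mul_of_nonneg_left e2 (by positivity)
          linarith
  -- off-diagonal row bound
  have hrowOff : ∀ (i t : ℕ), ∑ j ∈ (Finset.Icc 1 t).erase i, |γ ((i : ℤ) - (j : ℤ))| ≤ B := by
    intro i t
    rw [hBdef]
    have hinj : ∀ x ∈ (Finset.Icc 1 t).erase i, ∀ y ∈ (Finset.Icc 1 t).erase i,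
        (i : ℤ) - (x : ℤ) = (i : ℤ) - (y : ℤ) → x = y := by
      intro x _ y _ h; omega
    have him : ∑ j ∈ (Finset.Icc 1 t).erase i, |γ ((i : ℤ) - (j : ℤ))|
        = ∑ k ∈ ((Finset.Icc 1 t).erase i).image (fun j : ℕ => (i : ℤ) - (j : ℤ)), |γ k| :=
      (Finset.sum_image (f := fun k : ℤ => |γ k|) hinj).symm
    rw [him]
    set T := ((Finset.Icc 1 t).erase i).image (fun j : ℕ => (i : ℤ) - (j : ℤ)) with hT
    have hT0 : ∀ k ∈ T, k ≠ 0 := by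
      intro k hk
      rw [hT] at hk
      obtain ⟨j, hj, rfl⟩ := Finset.mem_image.mp hk
      have := (Finset.mem_erase.mp hj).1
      omega
    calc ∑ k ∈ T, |γ k| ≤ ∑ k ∈ T, γ 0 * c * q ^ k.natAbs :=
          Finset.sum_le_sum (fun k hk => hZ k (hT0 k hk))
      _ = γ 0 * c * ∑ k ∈ T, q ^ k.natAbs := by rw [Finset.mul_sum]
      _ ≤ γ 0 * c * (2 * q / (1 - q)) :=
          mul_le_mul_of_nonneg_left (geomZ_ne hq0.le hq1 T hT0) (by positivity)
  -- upper bound on covariances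
  have hcovub : ∀ t s : ℕ, |cov t s| ≤ M0 * t := by
    intro t s
    rw [hcov]
    calc |∑ i ∈ Finset.Icc 1 t, ∑ j ∈ Finset.Icc 1 s, γ ((i : ℤ) - (j : ℤ))|
        ≤ ∑ i ∈ Finset.Icc 1 t, |∑ j ∈ Finset.Icc 1 s, γ ((i : ℤ) - (j : ℤ))| :=
          Finset.abs_sum_le_sum_abs _ _
      _ ≤ ∑ i ∈ Finset.Icc 1 t, ∑ j ∈ Finset.Icc 1 s, |γ ((i : ℤ) - (j : ℤ))| :=
          Finset.sum_le_sum (fun i _ => Finset.abs_sum_le_sum_abs _ _)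
      _ ≤ ∑ _i ∈ Finset.Icc 1 t, M0 :=
          Finset.sum_le_sum (fun i _ => hrowAbs (i : ℤ) s)
      _ = M0 * t := by
          rw [Finset.sum_const, Nat.card_Icc, Nat.add_sub_cancel, nsmul_eq_mul]
          ring
  -- symmetry
  have hcovsymm : ∀ t s : ℕ, cov t s = cov s t := by
    intro t s
    rw [hcov, hcov, Finset.sum_comm]
    apply Finset.sum_congr rfl
    intro j _
    apply Finset.sum_congr rfl
    intro i _
    have h : (i : ℤ) - (j : ℤ) = -((j : ℤ) - (i : ℤ)) := by ring
    rw [h, hsym]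
  -- diagonal lower bound
  have hdiag : ∃ δ : ℝ, 0 < δ ∧ ∀ t : ℕ, δ * t ≤ cov t t := by
    by_cases hex : ∃ t : ℤ, γ t < 0
    · have hρ2 := hneg hex
      have hqlt : q < (2 * c + 1)⁻¹ := by
        have h1 : (2 * c + 1)⁻¹ = Real.exp (-(Real.log (2 * c + 1))) := by
          rw [Real.exp_neg, Real.exp_log (by linarith)]
        rw [hqdef, h1]
        exact Real.exp_lt_exp.mpr (by linarith)
      have h2cq : 2 * c * q < 1 - q := by
        have h1 : q * (2 * c + 1) < 1 := by
          have := mul_lt_mul_of_pos_right hqlt (show (0:ℝ) < 2 * c + 1 by linarith)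
          rwa [inv_mul_cancel₀ (by linarith : (2*c+1:ℝ) ≠ 0)] at this
        nlinarith
      have hBlt : B < γ 0 := by
        rw [hBdef]
        have h1 : c * (2 * q / (1 - q)) < 1 := by
          rw [show c * (2 * q / (1 - q)) = (2 * c * q) / (1 - q) by ring]
          rw [div_lt_one h1q]
          exact h2cq
        calc γ 0 * c * (2 * q / (1 - q)) = γ 0 * (c * (2 * q / (1 - q))) := by ring
          _ < γ 0 * 1 := by exact mul_lt_mul_of_pos_left h1 hγ0
          _ = γ 0 := mul_one _
      refine ⟨γ 0 - B, by linarith, ?_⟩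
      intro t
      rw [hcov]
      have hrow : ∀ i ∈ Finset.Icc 1 t, γ 0 - B ≤ ∑ j ∈ Finset.Icc 1 t, γ ((i : ℤ) - (j : ℤ)) := by
        intro i hi
        rw [← Finset.add_sum_erase _ _ hi]
        have h0 : γ ((i : ℤ) - (i : ℤ)) = γ 0 := by rw [sub_self]
        have h2 : -B ≤ ∑ j ∈ (Finset.Icc 1 t).erase i, γ ((i : ℤ) - (j : ℤ)) := by
          have ha := Finset.abs_sum_le_sum_abs
            (fun j : ℕ => γ ((i : ℤ) - (j : ℤ))) ((Finset.Icc 1 t).erase i)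
          have hb := hrowOff i t
          have hc := neg_abs_le (∑ j ∈ (Finset.Icc 1 t).erase i, γ ((i : ℤ) - (j : ℤ)))
          linarith
        rw [h0]
        linarith
      have hsum := Finset.sum_le_sum hrow
      rw [Finset.sum_const, Nat.card_Icc, Nat.add_sub_cancel, nsmul_eq_mul] at hsum
      calc (γ 0 - B) * (t : ℝ) = (t : ℝ) * (γ 0 - B) := by ring
        _ ≤ _ := hsum
    · push_neg at hex
      refine ⟨γ 0, hγ0, ?_⟩
      intro t
      rw [hcov]
      have hrow : ∀ i ∈ Finset.Icc 1 t, γ 0 ≤ ∑ j ∈ Finset.Icc 1 t, γ ((i : ℤ) - (j : ℤ)) := by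
        intro i hi
        have h := Finset.single_le_sum (f := fun j : ℕ => γ ((i : ℤ) - (j : ℤ)))
          (fun j _ => hex _) hi
        simpa using h
      have hsum := Finset.sum_le_sum hrow
      rw [Finset.sum_const, Nat.card_Icc, Nat.add_sub_cancel, nsmul_eq_mul] at hsum
      calc γ 0 * (t : ℝ) = (t : ℝ) * γ 0 := by ring
        _ ≤ _ := hsum
  obtain ⟨δ, hδpos, hδdiag⟩ := hdiag
  -- cross bound
  have hcross : ∀ t s : ℕ, t ≤ s → |cov t s - cov t t| ≤ Cq := by
    intro t s hts
    have hIcc : ∀ k : ℕ, Finset.Icc 1 k = Finset.Ioc 0 k := by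
      intro k
      rw [← Finset.Icc_add_one_left_eq_Ioc]; rfl
    have hsplit : ∀ i : ℕ,
        (∑ j ∈ Finset.Icc 1 s, γ ((i : ℤ) - (j : ℤ)))
          - ∑ j ∈ Finset.Icc 1 t, γ ((i : ℤ) - (j : ℤ))
        = ∑ j ∈ Finset.Ioc t s, γ ((i : ℤ) - (j : ℤ)) := by
      intro i
      rw [hIcc s, hIcc t, ← Finset.sum_Ioc_consecutive _ (Nat.zero_le t) hts]
      ring
    have hkey : cov t s - cov t t
        = ∑ i ∈ Finset.Icc 1 t, ∑ j ∈ Finset.Ioc t s, γ ((i : ℤ) - (j : ℤ)) := by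
      rw [hcov, hcov, ← Finset.sum_sub_distrib]
      exact Finset.sum_congr rfl (fun i _ => hsplit i)
    rw [hkey]
    have e1 : ∑ i ∈ Finset.Icc 1 t, q ^ (t - i) ≤ 1 / (1 - q) := by
      apply sum_image_le hq0.le hq1 (Finset.Icc 1 t) (fun i => t - i)
      intro a ha b hb hab
      have := Finset.mem_Icc.mp ha
      have := Finset.mem_Icc.mp hb
      omega
    have e2 : ∑ j ∈ Finset.Ioc t s, q ^ (j - t) ≤ 1 / (1 - q) * q := by
      have he : ∑ j ∈ Finset.Ioc t s, q ^ (j - t)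
          = (∑ j ∈ Finset.Ioc t s, q ^ (j - t - 1)) * q := by
        rw [Finset.sum_mul]
        apply Finset.sum_congr rfl
        intro j hj
        have hj' := Finset.mem_Ioc.mp hj
        rw [← pow_succ]
        congr 1
        omega
      rw [he]
      apply mul_le_mul_of_nonneg_right _ hq0.le
      apply sum_image_le hq0.le hq1 (Finset.Ioc t s) (fun j => j - t - 1)
      intro a ha b hb hab
      have := Finset.mem_Ioc.mp ha
      have := Finset.mem_Ioc.mp hb
      omega
    have hptw : ∀ i ∈ Finset.Icc 1 t, ∀ j ∈ Finset.Ioc t s,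
        |γ ((i : ℤ) - (j : ℤ))| ≤ γ 0 * c * (q ^ (t - i) * q ^ (j - t)) := by
      intro i hi j hj
      have hi' := Finset.mem_Icc.mp hi
      have hj' := Finset.mem_Ioc.mp hj
      have hne : (i : ℤ) - (j : ℤ) ≠ 0 := by omega
      have hna : ((i : ℤ) - (j : ℤ)).natAbs = (t - i) + (j - t) := by omega
      have := hZ _ hne
      rw [hna, pow_add] at this
      exact this
    calc |∑ i ∈ Finset.Icc 1 t, ∑ j ∈ Finset.Ioc t s, γ ((i : ℤ) - (j : ℤ))|
        ≤ ∑ i ∈ Finset.Icc 1 t, ∑ j ∈ Finset.Ioc t s, |γ ((i : ℤ) - (j : ℤ))| := by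
          refine le_trans (Finset.abs_sum_le_sum_abs _ _) ?_
          exact Finset.sum_le_sum (fun i _ => Finset.abs_sum_le_sum_abs _ _)
      _ ≤ ∑ i ∈ Finset.Icc 1 t, ∑ j ∈ Finset.Ioc t s, γ 0 * c * (q ^ (t - i) * q ^ (j - t)) := by
          apply Finset.sum_le_sum
          intro i hi
          exact Finset.sum_le_sum (fun j hj => hptw i hi j hj)
      _ = γ 0 * c * ((∑ i ∈ Finset.Icc 1 t, q ^ (t - i)) * (∑ j ∈ Finset.Ioc t s, q ^ (j - t))) := by
          rw [Finset.sum_mul_sum, Finset.mul_sum]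
          apply Finset.sum_congr rfl
          intro i _
          rw [Finset.mul_sum]
      _ ≤ Cq := by
          rw [hCdef]
          have hx : 0 ≤ ∑ i ∈ Finset.Icc 1 t, q ^ (t - i) :=
            Finset.sum_nonneg (fun i _ => by positivity)
          have hy : 0 ≤ ∑ j ∈ Finset.Ioc t s, q ^ (j - t) :=
            Finset.sum_nonneg (fun j _ => by positivity)
          have h1 : (∑ i ∈ Finset.Icc 1 t, q ^ (t - i)) * (∑ j ∈ Finset.Ioc t s, q ^ (j - t))
              ≤ 1 / (1 - q) * (1 / (1 - q) * q) :=
            mul_le_mul e1 e2 hy (by positivity)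
          have h2 : 1 / (1 - q) * (1 / (1 - q) * q) = 1 / (1 - q) * (q / (1 - q)) := by
            field_simp
          rw [h2] at h1
          exact mul_le_mul_of_nonneg_left h1 (by positivity)
  -- main eventual bounds
  have key : ∀ᶠ n : ℕ in atTop,
      (δ / 8 * (n : ℝ) ^ 2 ≤ tr n ∧ tr n ≤ (M0 + δ) * (n : ℝ) ^ 2) ∧
      (δ / 8 * (n : ℝ) ^ 2 ≤ fr n ∧ fr n ≤ (M0 + δ) * (n : ℝ) ^ 2) ∧ 1 ≤ n := by
    rw [Filter.eventually_atTop]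
    refine ⟨⌈4 * Cq / δ⌉₊ + 1, ?_⟩
    intro n hn
    have hn1 : 1 ≤ n := le_trans (Nat.le_add_left 1 _) hn
    have hn0 : (0:ℝ) < n := by exact_mod_cast hn1
    have hnC : Cq ≤ δ * n / 4 := by
      have h1 : (4 * Cq / δ : ℝ) ≤ ⌈4 * Cq / δ⌉₊ := Nat.le_ceil _
      have h2 : ((⌈4 * Cq / δ⌉₊ : ℕ) : ℝ) ≤ n := by
        exact_mod_cast le_trans (Nat.le_add_right _ 1) hn
      have h3 : 4 * Cq / δ ≤ n := le_trans h1 h2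
      rw [div_le_iff₀ hδpos] at h3
      linarith
    set m := n / 2 + 1 with hm
    have hsubset : Finset.Icc m n ⊆ Finset.Icc 1 n :=
      Finset.Icc_subset_Icc (Nat.le_add_left 1 _) le_rfl
    have hcard : (n : ℝ) / 2 ≤ ((Finset.Icc m n).card : ℝ) := by
      have hcn : n ≤ 2 * (Finset.Icc m n).card := by
        rw [Nat.card_Icc]; omega
      have : (n:ℝ) ≤ 2 * ((Finset.Icc m n).card : ℝ) := by exact_mod_cast hcn
      linarith
    have hmem : ∀ t ∈ Finset.Icc m n, (n : ℝ) / 2 ≤ (t : ℝ) := by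
      intro t ht
      have h := Finset.mem_Icc.mp ht
      have h2 : n ≤ 2 * t := by omega
      have h3 : (n:ℝ) ≤ 2 * t := by exact_mod_cast h2
      linarith
    have keylow : ∀ t ∈ Finset.Icc m n, ∀ s ∈ Finset.Icc m n, δ * (n:ℝ) / 4 ≤ cov t s := by
      have main : ∀ a b : ℕ, a ∈ Finset.Icc m n → b ∈ Finset.Icc m n → a ≤ b →
          δ * (n:ℝ) / 4 ≤ cov a b := by
        intro a b ha hb hab
        have h1 := (abs_le.mp (hcross a b hab)).1
        have h2 := hδdiag a
        have h3 := hmem a ha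
        have h4 : δ * ((n:ℝ)/2) ≤ δ * a := mul_le_mul_of_nonneg_left h3 hδpos.le
        linarith
      intro t ht s hs
      rcases le_total t s with h | h
      · exact main t s ht hs h
      · rw [hcovsymm]; exact main s t hs ht h
    have hn2 : (0:ℝ) < (n:ℝ)^2 := by positivity
    have htr_ub : tr n ≤ M0 * (n:ℝ)^2 := by
      rw [htr]
      calc ∑ t ∈ Finset.Icc 1 n, cov t t ≤ ∑ _t ∈ Finset.Icc 1 n, M0 * (n:ℝ) := by
            apply Finset.sum_le_sum
            intro t ht
            have h1 := le_trans (le_abs_self _) (hcovub t t)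
            have h2 : (t:ℝ) ≤ n := by exact_mod_cast (Finset.mem_Icc.mp ht).2
            nlinarith
        _ = M0 * (n:ℝ)^2 := by
            rw [Finset.sum_const, Nat.card_Icc, Nat.add_sub_cancel, nsmul_eq_mul]
            ring
    have htr_lb : δ / 8 * (n:ℝ)^2 ≤ tr n := by
      rw [htr]
      have h1 : ∀ t ∈ Finset.Icc m n, δ * ((n:ℝ)/2) ≤ cov t t := by
        intro t ht
        exact le_trans (mul_le_mul_of_nonneg_left (hmem t ht) hδpos.le) (hδdiag t)
      have h2 : ((Finset.Icc m n).card : ℝ) * (δ * ((n:ℝ)/2))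
          ≤ ∑ t ∈ Finset.Icc m n, cov t t := by
        have h := Finset.sum_le_sum h1
        rw [Finset.sum_const, nsmul_eq_mul] at h
        exact h
      have h3 : ∑ t ∈ Finset.Icc m n, cov t t ≤ ∑ t ∈ Finset.Icc 1 n, cov t t := by
        apply Finset.sum_le_sum_of_subset_of_nonneg hsubset
        intro t _ _
        exact le_trans (by positivity) (hδdiag t)
      have h4 : (n:ℝ)/2 * (δ * ((n:ℝ)/2)) ≤ ((Finset.Icc m n).card : ℝ) * (δ * ((n:ℝ)/2)) := by
        apply mul_le_mul_of_nonneg_right hcard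
        positivity
      nlinarith
    have hfr_ub : fr n ≤ M0 * (n:ℝ)^2 := by
      rw [hfr]
      have hS : ∑ t ∈ Finset.Icc 1 n, ∑ s ∈ Finset.Icc 1 n, (cov t s)^2 ≤ (M0 * (n:ℝ)^2)^2 := by
        calc ∑ t ∈ Finset.Icc 1 n, ∑ s ∈ Finset.Icc 1 n, (cov t s)^2
            ≤ ∑ _t ∈ Finset.Icc 1 n, ∑ _s ∈ Finset.Icc 1 n, (M0 * (n:ℝ))^2 := by
              apply Finset.sum_le_sum; intro t ht
              apply Finset.sum_le_sum; intro s hs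
              have h1 := hcovub t s
              have h2 : (t:ℝ) ≤ n := by exact_mod_cast (Finset.mem_Icc.mp ht).2
              have h3 : |cov t s| ≤ M0 * (n:ℝ) := by nlinarith
              calc (cov t s)^2 = |cov t s|^2 := (sq_abs _).symm
                _ ≤ (M0 * (n:ℝ))^2 := pow_le_pow_left₀ (abs_nonneg _) h3 2
          _ = (M0 * (n:ℝ)^2)^2 := by
              rw [Finset.sum_const, Finset.sum_const, Nat.card_Icc, Nat.add_sub_cancel,
                nsmul_eq_mul, nsmul_eq_mul]
              ring
      calc Real.sqrt (∑ t ∈ Finset.Icc 1 n, ∑ s ∈ Finset.Icc 1 n, (cov t s)^2)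
          ≤ Real.sqrt ((M0 * (n:ℝ)^2)^2) := Real.sqrt_le_sqrt hS
        _ = M0 * (n:ℝ)^2 := Real.sqrt_sq (by positivity)
    have hfr_lb : δ / 8 * (n:ℝ)^2 ≤ fr n := by
      rw [hfr]
      have hS : (δ / 8 * (n:ℝ)^2)^2
          ≤ ∑ t ∈ Finset.Icc 1 n, ∑ s ∈ Finset.Icc 1 n, (cov t s)^2 := by
        have s1 : ∑ t ∈ Finset.Icc m n, ∑ s ∈ Finset.Icc m n, (cov t s)^2
            ≤ ∑ t ∈ Finset.Icc 1 n, ∑ s ∈ Finset.Icc 1 n, (cov t s)^2 := by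
          have inner : ∀ t : ℕ, ∑ s ∈ Finset.Icc m n, (cov t s)^2
              ≤ ∑ s ∈ Finset.Icc 1 n, (cov t s)^2 := by
            intro t
            apply Finset.sum_le_sum_of_subset_of_nonneg hsubset
            intro s _ _
            positivity
          calc ∑ t ∈ Finset.Icc m n, ∑ s ∈ Finset.Icc m n, (cov t s)^2
              ≤ ∑ t ∈ Finset.Icc m n, ∑ s ∈ Finset.Icc 1 n, (cov t s)^2 :=
                Finset.sum_le_sum (fun t _ => inner t)
            _ ≤ ∑ t ∈ Finset.Icc 1 n, ∑ s ∈ Finset.Icc 1 n, (cov t s)^2 := by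
                apply Finset.sum_le_sum_of_subset_of_nonneg hsubset
                intro t _ _
                apply Finset.sum_nonneg
                intro s _
                positivity
        have s2 : ∑ _t ∈ Finset.Icc m n, ∑ _s ∈ Finset.Icc m n, (δ * (n:ℝ)/4)^2
            ≤ ∑ t ∈ Finset.Icc m n, ∑ s ∈ Finset.Icc m n, (cov t s)^2 := by
          apply Finset.sum_le_sum; intro t ht
          apply Finset.sum_le_sum; intro s hs
          exact pow_le_pow_left₀ (by positivity) (keylow t ht s hs) 2
        have s3 : ∑ _t ∈ Finset.Icc m n, ∑ _s ∈ Finset.Icc m n, (δ * (n:ℝ)/4)^2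
            = ((Finset.Icc m n).card : ℝ) * (((Finset.Icc m n).card : ℝ) * (δ * (n:ℝ)/4)^2) := by
          rw [Finset.sum_const, Finset.sum_const, nsmul_eq_mul, nsmul_eq_mul]
        have s4 : (δ / 8 * (n:ℝ)^2)^2
            ≤ ((Finset.Icc m n).card : ℝ) * (((Finset.Icc m n).card : ℝ) * (δ * (n:ℝ)/4)^2) := by
          have hc0 : (0:ℝ) ≤ ((Finset.Icc m n).card : ℝ) := Nat.cast_nonneg _
          have hX : (n:ℝ)/2 * ((n:ℝ)/2)
              ≤ ((Finset.Icc m n).card : ℝ) * ((Finset.Icc m n).card : ℝ) :=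
            mul_le_mul hcard hcard (by linarith) hc0
          have hY : (n:ℝ)/2 * ((n:ℝ)/2) * (δ * (n:ℝ)/4)^2
              ≤ ((Finset.Icc m n).card : ℝ) * ((Finset.Icc m n).card : ℝ) * (δ * (n:ℝ)/4)^2 :=
            mul_le_mul_of_nonneg_right hX (sq_nonneg _)
          calc (δ / 8 * (n:ℝ)^2)^2 = (n:ℝ)/2 * ((n:ℝ)/2) * (δ * (n:ℝ)/4)^2 := by ring
            _ ≤ ((Finset.Icc m n).card : ℝ) * ((Finset.Icc m n).card : ℝ) * (δ * (n:ℝ)/4)^2 := hY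
            _ = ((Finset.Icc m n).card : ℝ) * (((Finset.Icc m n).card : ℝ) * (δ * (n:ℝ)/4)^2) := by
              ring
        linarith
      calc δ / 8 * (n:ℝ)^2 = Real.sqrt ((δ / 8 * (n:ℝ)^2)^2) :=
            (Real.sqrt_sq (by positivity)).symm
        _ ≤ _ := Real.sqrt_le_sqrt hS
    have hδn : 0 ≤ δ * (n:ℝ)^2 := by positivity
    refine ⟨⟨htr_lb, by nlinarith⟩, ⟨hfr_lb, by nlinarith⟩, hn1⟩
  have hc12 : 0 < δ / 8 := by positivity
  constructor
  · refine ⟨δ / 8, M0 + δ, hc12, by linarith, ?_⟩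
    filter_upwards [key] with n hn
    obtain ⟨⟨t1, t2⟩, ⟨f1, f2⟩, hn1⟩ := hn
    have hnn : (0:ℝ) < (n:ℝ) := by exact_mod_cast hn1
    have hn0 : (0:ℝ) < (n:ℝ)^2 := by positivity
    refine ⟨⟨?_, ?_⟩, ?_, ?_⟩
    · rw [le_div_iff₀ hn0]; linarith
    · rw [div_le_iff₀ hn0]; linarith
    · rw [le_div_iff₀ hn0]; linarith
    · rw [div_le_iff₀ hn0]; linarith
  · intro hT
    have hr : 0 < δ / 8 / (M0 + δ) := by positivity
    have hlb : ∀ᶠ n : ℕ in atTop, δ / 8 / (M0 + δ) ≤ fr n / tr n := by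
      filter_upwards [key] with n hn
      obtain ⟨⟨t1, t2⟩, ⟨f1, f2⟩, hn1⟩ := hn
      have hnn : (0:ℝ) < (n:ℝ) := by exact_mod_cast hn1
      have hn0 : (0:ℝ) < (n:ℝ)^2 := by positivity
      have htr0 : 0 < tr n := lt_of_lt_of_le (by positivity) t1
      have h1 : δ / 8 * (n:ℝ)^2 / ((M0 + δ) * (n:ℝ)^2) ≤ fr n / tr n :=
        div_le_div₀ (le_trans (by positivity) f1) f1 htr0 t2
      have hMδ : (M0 + δ) ≠ 0 := by positivity
      have h2 : δ / 8 * (n:ℝ)^2 / ((M0 + δ) * (n:ℝ)^2) = δ / 8 / (M0 + δ) := by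
        field_simp
      rw [h2] at h1
      exact h1
    have hub := hT.eventually (gt_mem_nhds hr)
    obtain ⟨n, h1, h2⟩ := (hlb.and hub).exists
    linarith
end

section
/- In the population partial least squares problem under the latent variable model, the maximizer w₁ of the averaged covariance n^{−2} ∑_{t,s=1}^n Cov(y_t, X_s^T w) over unit vectors w ∈ R^k is proportional to Pq and is independent of the temporal covariance matrix V². Specifically, n^{−2} ∑_{t,s} Cov(y_t, X_s^T w) = (n^{−2} ∑_{t,s} (V²)_{t,s}) · (Pq)^T w, so w₁ = Pq/||Pq|| whenever ∑_{t,s}(V²)_{t,s} > 0 and Pq ≠ 0. -/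
open MeasureTheory ProbabilityTheory Matrix

/-- Population partial least squares under the latent variable model: the averaged
cross-covariance factorizes as `n⁻² ∑_{t,s} Cov(y_t, X_sᵀ w) = (n⁻² ∑_{t,s} (V²)_{t,s})
(Pq)ᵀ w`, so it is maximized over unit vectors by `w₁ = Pq/‖Pq‖` whenever
`∑_{t,s} (V²)_{t,s} > 0` and `Pq ≠ 0`; in particular `w₁` does not depend on `V²`. -/
theorem population_pls_first_direction
    (n k l : ℕ) (Ω : Type*) [MeasurableSpace Ω] (μ : Measure Ω) [IsProbabilityMeasure μ]
    (V : Matrix (Fin n) (Fin n) ℝ) (hVsymm : V.IsSymm) (hVpos : (V * V).PosDef)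
    (P : Matrix (Fin k) (Fin l) ℝ) (q : Fin l → ℝ) (η₁ η₂ : ℝ) (hη₁ : 0 ≤ η₁) (hη₂ : 0 ≤ η₂)
    (N : Ω → Matrix (Fin n) (Fin l) ℝ) (F : Ω → Matrix (Fin n) (Fin k) ℝ) (f : Ω → Fin n → ℝ)
    (g : (Fin n × Fin l) ⊕ (Fin n × Fin k) ⊕ Fin n → Ω → ℝ)
    (hgN : ∀ t i, g (Sum.inl (t, i)) = fun ω => N ω t i)
    (hgF : ∀ t i, g (Sum.inr (Sum.inl (t, i))) = fun ω => F ω t i)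
    (hgf : ∀ t, g (Sum.inr (Sum.inr t)) = fun ω => f ω t)
    (hIndep : iIndepFun g μ)
    (hNid : ∀ a b, IdentDistrib (g (Sum.inl a)) (g (Sum.inl b)) μ μ)
    (hFid : ∀ a b, IdentDistrib (g (Sum.inr (Sum.inl a))) (g (Sum.inr (Sum.inl b))) μ μ)
    (hfid : ∀ a b, IdentDistrib (g (Sum.inr (Sum.inr a))) (g (Sum.inr (Sum.inr b))) μ μ)
    (hmean : ∀ a, ∫ ω, g a ω ∂μ = 0)
    (hvar : ∀ a, ∫ ω, (g a ω) ^ 2 ∂μ = 1)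
    (X : Ω → Matrix (Fin n) (Fin k) ℝ) (y : Ω → Fin n → ℝ)
    (hX : ∀ ω, X ω = V * (N ω * Pᵀ + η₁ • F ω))
    (hy : ∀ ω, y ω = V *ᵥ (N ω *ᵥ q + η₂ • f ω))
    (hInty : ∀ t, Integrable (fun ω => y ω t) μ)
    (hIntX : ∀ s j, Integrable (fun ω => X ω s j) μ)
    (hIntyX : ∀ t s j, Integrable (fun ω => y ω t * X ω s j) μ)
    -- averaged cross-covariance of `y` and `Xw`
    (C : (Fin k → ℝ) → ℝ)
    (hC : ∀ w, C w = ((n : ℝ) ^ 2)⁻¹ * ∑ t : Fin n, ∑ s : Fin n,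
      ((∫ ω, y ω t * (X ω *ᵥ w) s ∂μ) - (∫ ω, y ω t ∂μ) * ∫ ω, (X ω *ᵥ w) s ∂μ)) :
    (∀ w : Fin k → ℝ,
        C w = (((n : ℝ) ^ 2)⁻¹ * ∑ t : Fin n, ∑ s : Fin n, (V * V) t s) * ((P *ᵥ q) ⬝ᵥ w)) ∧
    ((0 < ∑ t : Fin n, ∑ s : Fin n, (V * V) t s) → P *ᵥ q ≠ 0 →
      ∀ w : Fin k → ℝ, ∑ j : Fin k, (w j) ^ 2 = 1 →
        C w ≤ C (fun j => (P *ᵥ q) j / Real.sqrt (∑ j' : Fin k, ((P *ᵥ q) j') ^ 2))) := by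
  classical
  -- every coordinate is a.e. measurable (from the identical-distribution hypotheses)
  have hmeas : ∀ a, AEMeasurable (g a) μ := by
    rintro (p | p | t)
    · exact (hNid p p).aemeasurable_fst
    · exact (hFid p p).aemeasurable_fst
    · exact (hfid t t).aemeasurable_fst
  -- squares are integrable (else their integral would be 0, not 1)
  have hsq : ∀ a, Integrable (fun ω => (g a ω) ^ 2) μ := by
    intro a
    by_contra h
    exact one_ne_zero ((hvar a).symm.trans (integral_undef h))
  -- coordinates are integrable
  have hint : ∀ a, Integrable (g a) μ := by
    intro a
    refine Integrable.mono' ((hsq a).add (integrable_const 1)) (hmeas a).aestronglyMeasurable ?_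
    filter_upwards with ω
    have h1 : |g a ω| ≤ (g a ω) ^ 2 + 1 := by nlinarith [sq_nonneg (|g a ω| - 1), sq_abs (g a ω)]
    simpa [Real.norm_eq_abs] using h1
  -- products of coordinates are integrable
  have hmul : ∀ a b, Integrable (fun ω => g a ω * g b ω) μ := by
    intro a b
    by_cases hab : a = b
    · subst hab; simpa [pow_two] using hsq a
    · exact (hIndep.indepFun hab).integrable_mul (hint a) (hint b)
  -- integrals of products of coordinates
  have hmulI : ∀ a b, (∫ ω, g a ω * g b ω ∂μ) = if a = b then 1 else 0 := by
    intro a b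
    by_cases hab : a = b
    · subst hab; rw [if_pos rfl]; simpa [pow_two] using hvar a
    · rw [if_neg hab]
      have h2 := (hIndep.indepFun hab).integral_mul_eq_mul_integral (hint a).1 (hint b).1
      simpa [hmean a, hmean b] using h2
  -- the row-level latent variables
  set A : Fin n → Ω → ℝ :=
    fun u ω => (∑ i, g (Sum.inl (u, i)) ω * q i) + η₂ * g (Sum.inr (Sum.inr u)) ω with hA
  set B : Fin n → Fin k → Ω → ℝ :=
    fun v j ω => (∑ i, g (Sum.inl (v, i)) ω * P j i) + η₁ * g (Sum.inr (Sum.inl (v, j))) ω with hB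
  have hAint : ∀ u, Integrable (A u) μ :=
    fun u => (integrable_finset_sum _ fun i _ => (hint _).mul_const _).add ((hint _).const_mul _)
  have hBint : ∀ v j, Integrable (B v j) μ :=
    fun v j => (integrable_finset_sum _ fun i _ => (hint _).mul_const _).add ((hint _).const_mul _)
  have hAI : ∀ u, ∫ ω, A u ω ∂μ = 0 := by
    intro u
    simp only [hA]
    rw [integral_add (integrable_finset_sum _ fun i _ => (hint _).mul_const _)
      ((hint _).const_mul _), integral_finset_sum _ fun i _ => (hint _).mul_const _]
    simp [integral_mul_const, integral_const_mul, hmean]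
  have hBI : ∀ v j, ∫ ω, B v j ω ∂μ = 0 := by
    intro v j
    simp only [hB]
    rw [integral_add (integrable_finset_sum _ fun i _ => (hint _).mul_const _)
      ((hint _).const_mul _), integral_finset_sum _ fun i _ => (hint _).mul_const _]
    simp [integral_mul_const, integral_const_mul, hmean]
  -- expansion of the product A u * B v j
  have hABfun : ∀ u v j, (fun ω => A u ω * B v j ω) = fun ω =>
      (∑ i, ∑ i', (q i * P j i') * (g (Sum.inl (u, i)) ω * g (Sum.inl (v, i')) ω))
      + ((∑ i, (q i * η₁) * (g (Sum.inl (u, i)) ω * g (Sum.inr (Sum.inl (v, j))) ω))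
      + ((∑ i', (η₂ * P j i') * (g (Sum.inr (Sum.inr u)) ω * g (Sum.inl (v, i')) ω))
      + (η₂ * η₁) * (g (Sum.inr (Sum.inr u)) ω * g (Sum.inr (Sum.inl (v, j))) ω))) := by
    intro u v j
    funext ω
    simp only [hA, hB]
    rw [add_mul, mul_add, mul_add, add_assoc]
    congr 1
    · rw [Finset.sum_mul_sum]
      exact Finset.sum_congr rfl fun i _ => Finset.sum_congr rfl fun i' _ => by ring
    congr 1
    · rw [Finset.sum_mul]
      exact Finset.sum_congr rfl fun i _ => by ring
    congr 1
    · rw [Finset.mul_sum]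
      exact Finset.sum_congr rfl fun i' _ => by ring
    · ring
  have hABint : ∀ u v j, Integrable (fun ω => A u ω * B v j ω) μ := by
    intro u v j
    rw [hABfun u v j]
    exact (integrable_finset_sum _ fun i _ =>
        integrable_finset_sum _ fun i' _ => (hmul _ _).const_mul _).add
      ((integrable_finset_sum _ fun i _ => (hmul _ _).const_mul _).add
        ((integrable_finset_sum _ fun i' _ => (hmul _ _).const_mul _).add
          ((hmul _ _).const_mul _)))
  have hABI : ∀ u v j, (∫ ω, A u ω * B v j ω ∂μ)
      = if u = v then ∑ i, q i * P j i else 0 := by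
    intro u v j
    have e2 : ∀ (i i' : Fin l), Integrable
        (fun ω => q i * P j i' * (g (Sum.inl (u, i)) ω * g (Sum.inl (v, i')) ω)) μ :=
      fun i i' => (hmul _ _).const_mul _
    have e1 : ∀ i : Fin l, Integrable
        (fun ω => ∑ i' : Fin l, q i * P j i' * (g (Sum.inl (u, i)) ω * g (Sum.inl (v, i')) ω)) μ :=
      fun i => integrable_finset_sum _ fun i' _ => e2 i i'
    have e3 : ∀ i : Fin l, Integrable
        (fun ω => q i * η₁ * (g (Sum.inl (u, i)) ω * g (Sum.inr (Sum.inl (v, j))) ω)) μ :=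
      fun i => (hmul _ _).const_mul _
    have e4 : ∀ i' : Fin l, Integrable
        (fun ω => η₂ * P j i' * (g (Sum.inr (Sum.inr u)) ω * g (Sum.inl (v, i')) ω)) μ :=
      fun i' => (hmul _ _).const_mul _
    have int1 : Integrable (fun ω => ∑ i : Fin l, ∑ i' : Fin l,
        q i * P j i' * (g (Sum.inl (u, i)) ω * g (Sum.inl (v, i')) ω)) μ :=
      integrable_finset_sum _ fun i _ => e1 i
    have int2 : Integrable (fun ω => ∑ i : Fin l,
        q i * η₁ * (g (Sum.inl (u, i)) ω * g (Sum.inr (Sum.inl (v, j))) ω)) μ :=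
      integrable_finset_sum _ fun i _ => e3 i
    have int3 : Integrable (fun ω => ∑ i' : Fin l,
        η₂ * P j i' * (g (Sum.inr (Sum.inr u)) ω * g (Sum.inl (v, i')) ω)) μ :=
      integrable_finset_sum _ fun i' _ => e4 i'
    have int4 : Integrable
        (fun ω => η₂ * η₁ * (g (Sum.inr (Sum.inr u)) ω * g (Sum.inr (Sum.inl (v, j))) ω)) μ :=
      (hmul _ _).const_mul _
    have int34 : Integrable (fun ω =>
        (∑ i' : Fin l, η₂ * P j i' * (g (Sum.inr (Sum.inr u)) ω * g (Sum.inl (v, i')) ω))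
        + η₂ * η₁ * (g (Sum.inr (Sum.inr u)) ω * g (Sum.inr (Sum.inl (v, j))) ω)) μ :=
      int3.add int4
    have int234 : Integrable (fun ω =>
        (∑ i : Fin l, q i * η₁ * (g (Sum.inl (u, i)) ω * g (Sum.inr (Sum.inl (v, j))) ω))
        + ((∑ i' : Fin l, η₂ * P j i' * (g (Sum.inr (Sum.inr u)) ω * g (Sum.inl (v, i')) ω))
        + η₂ * η₁ * (g (Sum.inr (Sum.inr u)) ω * g (Sum.inr (Sum.inl (v, j))) ω))) μ :=
      int2.add int34
    rw [hABfun u v j, integral_add int1 int234,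
      integral_add int2 int34, integral_add int3 int4,
      integral_finset_sum _ fun i _ => e1 i,
      integral_finset_sum _ fun i _ => e3 i,
      integral_finset_sum _ fun i' _ => e4 i']
    have s1 : ∀ i : Fin l, (∫ ω, ∑ i' : Fin l,
        q i * P j i' * (g (Sum.inl (u, i)) ω * g (Sum.inl (v, i')) ω) ∂μ)
        = ∑ i' : Fin l, q i * P j i' *
          (if (Sum.inl (u, i) : (Fin n × Fin l) ⊕ (Fin n × Fin k) ⊕ Fin n)
            = Sum.inl (v, i') then (1:ℝ) else 0) := by
      intro i
      rw [integral_finset_sum _ fun i' _ => e2 i i']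
      exact Finset.sum_congr rfl fun i' _ => by rw [integral_const_mul, hmulI]
    simp only [s1, integral_const_mul, hmulI]
    by_cases huv : u = v
    · subst huv
      simp [Prod.ext_iff, Finset.sum_ite_eq, mul_ite]
    · simp [huv, Prod.ext_iff]
  -- expressing y and X through A and B
  have hy' : ∀ t ω, y ω t = ∑ u, V t u * A u ω := by
    intro t ω
    rw [hy ω]
    simp only [hA, Matrix.mulVec, dotProduct, Pi.add_apply, Pi.smul_apply, smul_eq_mul,
      hgN, hgf]
  have hX' : ∀ s j ω, X ω s j = ∑ v, V s v * B v j ω := by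
    intro s j ω
    rw [hX ω]
    simp only [hB, Matrix.mul_apply, Matrix.add_apply, Matrix.smul_apply, smul_eq_mul,
      Matrix.transpose_apply, hgN, hgF]
  -- the three moment computations
  have I1 : ∀ t, ∫ ω, y ω t ∂μ = 0 := by
    intro t
    have h3 : (fun ω => y ω t) = fun ω => ∑ u, V t u * A u ω := by
      funext ω; exact hy' t ω
    rw [h3, integral_finset_sum _ fun u _ => (hAint u).const_mul _]
    simp [integral_const_mul, hAI]
  have I2 : ∀ s j, ∫ ω, X ω s j ∂μ = 0 := by
    intro s j
    have h3 : (fun ω => X ω s j) = fun ω => ∑ v, V s v * B v j ω := by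
      funext ω; exact hX' s j ω
    rw [h3, integral_finset_sum _ fun v _ => (hBint v j).const_mul _]
    simp [integral_const_mul, hBI]
  have I3 : ∀ t s j, ∫ ω, y ω t * X ω s j ∂μ = (V * V) t s * (P *ᵥ q) j := by
    intro t s j
    have h3 : (fun ω => y ω t * X ω s j)
        = fun ω => ∑ u, ∑ v, (V t u * V s v) * (A u ω * B v j ω) := by
      funext ω
      rw [hy' t ω, hX' s j ω, Finset.sum_mul_sum]
      exact Finset.sum_congr rfl fun u _ => Finset.sum_congr rfl fun v _ => by ring
    rw [h3, integral_finset_sum _ fun u _ =>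
      integrable_finset_sum _ fun v _ => (hABint u v j).const_mul _]
    simp only [integral_finset_sum _ fun v _ => (hABint _ v j).const_mul _,
      integral_const_mul, hABI]
    have h4 : ∀ u : Fin n, ∑ v, (V t u * V s v) * (if u = v then ∑ i, q i * P j i else 0)
        = V t u * V s u * ∑ i, q i * P j i := by
      intro u
      rw [Finset.sum_eq_single u]
      · simp
      · intro v _ hvu; simp [Ne.symm hvu]
      · simp
    simp only [h4]
    rw [Matrix.mul_apply, Finset.sum_mul]
    refine Finset.sum_congr rfl fun u _ => ?_
    rw [hVsymm.apply s u]
    simp only [Matrix.mulVec, dotProduct]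
    rw [mul_assoc, mul_assoc]
    congr 1
    congr 1
    exact Finset.sum_congr rfl fun i _ => mul_comm _ _
  -- integrals involving X *ᵥ w
  have I4 : ∀ (w : Fin k → ℝ) (s : Fin n), ∫ ω, (X ω *ᵥ w) s ∂μ = 0 := by
    intro w s
    have h3 : (fun ω => (X ω *ᵥ w) s) = fun ω => ∑ j, X ω s j * w j := rfl
    rw [h3, integral_finset_sum _ fun j _ => (hIntX s j).mul_const _]
    simp [integral_mul_const, I2]
  have I5 : ∀ (w : Fin k → ℝ) (t s : Fin n), ∫ ω, y ω t * (X ω *ᵥ w) s ∂μ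
      = (V * V) t s * ((P *ᵥ q) ⬝ᵥ w) := by
    intro w t s
    have h3 : (fun ω => y ω t * (X ω *ᵥ w) s)
        = fun ω => ∑ j, (y ω t * X ω s j) * w j := by
      funext ω
      show y ω t * ∑ j, X ω s j * w j = _
      rw [Finset.mul_sum]
      exact Finset.sum_congr rfl fun j _ => by ring
    rw [h3, integral_finset_sum _ fun j _ => (hIntyX t s j).mul_const _]
    simp only [integral_mul_const, I3]
    simp only [dotProduct]
    rw [Finset.mul_sum]
    exact Finset.sum_congr rfl fun j _ => by ring
  -- Part 1 : the factorization
  have part1 : ∀ w : Fin k → ℝ,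
      C w = (((n : ℝ) ^ 2)⁻¹ * ∑ t : Fin n, ∑ s : Fin n, (V * V) t s) * ((P *ᵥ q) ⬝ᵥ w) := by
    intro w
    rw [hC w]
    have h5 : ∀ t s : Fin n, (∫ ω, y ω t * (X ω *ᵥ w) s ∂μ)
        - (∫ ω, y ω t ∂μ) * ∫ ω, (X ω *ᵥ w) s ∂μ = (V * V) t s * ((P *ᵥ q) ⬝ᵥ w) := by
      intro t s
      rw [I5 w t s, I1 t, I4 w s]
      ring
    simp only [h5]
    rw [mul_assoc]
    congr 1
    rw [Finset.sum_mul]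
    exact Finset.sum_congr rfl fun t _ => (Finset.sum_mul _ _ _).symm
  refine ⟨part1, ?_⟩
  -- Part 2 : maximization over the unit sphere
  intro hpos hPq w hw
  have hn : n ≠ 0 := by
    rintro rfl
    simp at hpos
  have hn2 : (0:ℝ) < ((n : ℝ) ^ 2)⁻¹ := by
    have h9 : (0:ℝ) < (n:ℝ) := by exact_mod_cast Nat.pos_of_ne_zero hn
    positivity
  set S : ℝ := ∑ j' : Fin k, ((P *ᵥ q) j') ^ 2 with hS
  have hSpos : 0 < S := by
    rcases Function.ne_iff.mp hPq with ⟨j0, hj0⟩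
    have hj0' : (P *ᵥ q) j0 ≠ 0 := by simpa using hj0
    have h6 : 0 < ((P *ᵥ q) j0) ^ 2 := by
      have h10 := abs_pos.mpr hj0'
      nlinarith [sq_abs ((P *ᵥ q) j0)]
    exact Finset.sum_pos' (fun j _ => sq_nonneg _) ⟨j0, Finset.mem_univ _, h6⟩
  rw [part1 w, part1 _]
  refine mul_le_mul_of_nonneg_left ?_ (mul_pos hn2 hpos).le
  have hdot1 : (P *ᵥ q) ⬝ᵥ (fun j => (P *ᵥ q) j / Real.sqrt S) = Real.sqrt S := by
    simp only [dotProduct]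
    have h7 : ∑ j, (P *ᵥ q) j * ((P *ᵥ q) j / Real.sqrt S)
        = (∑ j, ((P *ᵥ q) j) ^ 2) / Real.sqrt S := by
      rw [Finset.sum_div]
      exact Finset.sum_congr rfl fun j _ => by ring
    rw [h7, ← hS, Real.div_sqrt]
  rw [hdot1]
  have hCS : ((P *ᵥ q) ⬝ᵥ w) ^ 2 ≤ S := by
    have h8 := Finset.sum_mul_sq_le_sq_mul_sq Finset.univ (fun j => (P *ᵥ q) j) w
    rw [hw] at h8
    simpa [dotProduct, ← hS] using h8
  calc (P *ᵥ q) ⬝ᵥ w ≤ |(P *ᵥ q) ⬝ᵥ w| := le_abs_self _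
    _ = Real.sqrt (((P *ᵥ q) ⬝ᵥ w) ^ 2) := (Real.sqrt_sq_eq_abs _).symm
    _ ≤ Real.sqrt S := Real.sqrt_le_sqrt hCS
end
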